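/- Let G be a simple graph with m edges, let k ≥ 1 be an integer, and let H be the (2k)-subdivision of G. Then every independent set of H has size at most α(G) + m·k, where α(G) denotes the maximum size of an independent set of G. -/

import Mathlib

/-- A set of vertices is independent if no two of its elements are adjacent. -/
def IsIndepSet {V : Type*} (G : SimpleGraph V) (S : Set V) : Prop :=
  ∀ u ∈ S, ∀ w ∈ S, ¬ G.Adj u w

/-- `H` is the `(2k)`-subdivision of `G`: every edge `e = {u,v}` of `G` is replaced by
a path `(u, w^e_1, …, w^e_{2k}, v)` with `2k` new inner vertices, distinct inner
vertices for distinct edges. -/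
structure IsSubdivision2k {V W : Type*} (G : SimpleGraph V) (k : ℕ) (H : SimpleGraph W) where
  /-- images of the original vertices -/
  vmap : V → W
  /-- the inner path nodes of each edge -/
  inner : G.edgeSet → Fin (2 * k) → W
  /-- a choice of the two endpoints of each edge -/
  ends : G.edgeSet → V × V
  ends_eq : ∀ e : G.edgeSet, (e : Sym2 V) = s((ends e).1, (ends e).2)
  vmap_inj : Function.Injective vmap
  inner_inj : Function.Injective fun pr : G.edgeSet × Fin (2 * k) => inner pr.1 pr.2
  vmap_ne_inner : ∀ (a : V) (e : G.edgeSet) (i : Fin (2 * k)), vmap a ≠ inner e i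
  cover : ∀ w : W, (∃ a : V, w = vmap a) ∨ ∃ (e : G.edgeSet) (i : Fin (2 * k)), w = inner e i
  adj_iff : ∀ x y : W, H.Adj x y ↔
    (∃ (e : G.edgeSet) (i j : Fin (2 * k)), (i : ℕ) + 1 = (j : ℕ) ∧
        ((x = inner e i ∧ y = inner e j) ∨ (x = inner e j ∧ y = inner e i))) ∨
    (∃ (e : G.edgeSet) (i : Fin (2 * k)), (i : ℕ) = 0 ∧
        ((x = vmap (ends e).1 ∧ y = inner e i) ∨ (y = vmap (ends e).1 ∧ x = inner e i))) ∨
    (∃ (e : G.edgeSet) (i : Fin (2 * k)), (i : ℕ) = 2 * k - 1 ∧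
        ((x = vmap (ends e).2 ∧ y = inner e i) ∨ (y = vmap (ends e).2 ∧ x = inner e i)))

lemma no_consec_card_le (k : ℕ) (A : Finset (Fin (2 * k)))
    (h : ∀ i ∈ A, ∀ j ∈ A, (i : ℕ) + 1 ≠ (j : ℕ)) : A.card ≤ k := by
  have := Finset.card_le_card_of_injOn (f := fun i : Fin (2 * k) => (i : ℕ) / 2)
    (t := Finset.range k) (fun i hi => by
      have := i.isLt
      simp only [Finset.mem_coe, Finset.mem_range]
      omega)
    (fun i hi j hj hij => by
      have h1 := h i hi j hj
      have h2 := h j hj i hi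
      have hij2 : (i : ℕ) / 2 = (j : ℕ) / 2 := hij
      have : (i : ℕ) = (j : ℕ) := by omega
      exact Fin.ext this)
  simpa using this

lemma no_consec_card_le' (k : ℕ) (hk : 1 ≤ k) (A : Finset (Fin (2 * k)))
    (h : ∀ i ∈ A, ∀ j ∈ A, (i : ℕ) + 1 ≠ (j : ℕ))
    (h0 : ∀ i ∈ A, (i : ℕ) ≠ 0)
    (h1 : ∀ i ∈ A, (i : ℕ) ≠ 2 * k - 1) : A.card ≤ k - 1 := by
  have := Finset.card_le_card_of_injOn (f := fun i : Fin (2 * k) => ((i : ℕ) - 1) / 2)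
    (t := Finset.range (k - 1)) (fun i hi => by
      have := i.isLt
      have := h0 i hi
      have := h1 i hi
      simp only [Finset.mem_coe, Finset.mem_range]
      omega)
    (fun i hi j hj hij => by
      have ha := h i hi j hj
      have hb := h j hj i hi
      have hc := h0 i hi
      have hd := h0 j hj
      have hij2 : ((i : ℕ) - 1) / 2 = ((j : ℕ) - 1) / 2 := hij
      have : (i : ℕ) = (j : ℕ) := by omega
      exact Fin.ext this)
  simpa using this

theorem indep_subdivision_le' {V W : Type*} [Fintype V] [Fintype W]
    (G : SimpleGraph V) (k : ℕ) (hk : 1 ≤ k) (H : SimpleGraph W)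
    (vmap : V → W) (inner : G.edgeSet → Fin (2 * k) → W) (ends : G.edgeSet → V × V)
    (ends_eq : ∀ e : G.edgeSet, (e : Sym2 V) = s((ends e).1, (ends e).2))
    (vmap_inj : Function.Injective vmap)
    (inner_inj : Function.Injective fun pr : G.edgeSet × Fin (2 * k) => inner pr.1 pr.2)
    (vmap_ne_inner : ∀ (a : V) (e : G.edgeSet) (i : Fin (2 * k)), vmap a ≠ inner e i)
    (cover : ∀ w : W, (∃ a : V, w = vmap a) ∨ ∃ (e : G.edgeSet) (i : Fin (2 * k)), w = inner e i)
    (adj_iff : ∀ x y : W, H.Adj x y ↔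
    (∃ (e : G.edgeSet) (i j : Fin (2 * k)), (i : ℕ) + 1 = (j : ℕ) ∧
        ((x = inner e i ∧ y = inner e j) ∨ (x = inner e j ∧ y = inner e i))) ∨
    (∃ (e : G.edgeSet) (i : Fin (2 * k)), (i : ℕ) = 0 ∧
        ((x = vmap (ends e).1 ∧ y = inner e i) ∨ (y = vmap (ends e).1 ∧ x = inner e i))) ∨
    (∃ (e : G.edgeSet) (i : Fin (2 * k)), (i : ℕ) = 2 * k - 1 ∧
        ((x = vmap (ends e).2 ∧ y = inner e i) ∨ (y = vmap (ends e).2 ∧ x = inner e i))))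
    (m : ℕ) (hm : m = Nat.card G.edgeSet)
    (α : ℕ) (hα : IsGreatest {a : ℕ | ∃ S : Set V, (∀ u ∈ S, ∀ w ∈ S, ¬ G.Adj u w) ∧ S.ncard = a} α)
    (T : Set W) (hT : ∀ u ∈ T, ∀ w ∈ T, ¬ H.Adj u w) :
    T.ncard ≤ α + m * k := by
  classical
  haveI : Fintype G.edgeSet := Fintype.ofFinite _
  set Sf : Finset V := Finset.univ.filter (fun a => vmap a ∈ T) with hSfdef
  set Af : G.edgeSet → Finset (Fin (2 * k)) :=
    fun e => Finset.univ.filter (fun i => inner e i ∈ T) with hAfdef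
  set B : Finset G.edgeSet :=
    Finset.univ.filter (fun e => vmap (ends e).1 ∈ T ∧ vmap (ends e).2 ∈ T) with hBdef
  -- adjacency consequences
  have adj_inner : ∀ (e : G.edgeSet) (i j : Fin (2 * k)), (i : ℕ) + 1 = (j : ℕ) →
      H.Adj (inner e i) (inner e j) := by
    intro e i j hij
    rw [adj_iff]
    exact Or.inl ⟨e, i, j, hij, Or.inl ⟨rfl, rfl⟩⟩
  have adj_first : ∀ (e : G.edgeSet) (i : Fin (2 * k)), (i : ℕ) = 0 →
      H.Adj (vmap (ends e).1) (inner e i) := by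
    intro e i hi
    rw [adj_iff]
    exact Or.inr (Or.inl ⟨e, i, hi, Or.inl ⟨rfl, rfl⟩⟩)
  have adj_last : ∀ (e : G.edgeSet) (i : Fin (2 * k)), (i : ℕ) = 2 * k - 1 →
      H.Adj (vmap (ends e).2) (inner e i) := by
    intro e i hi
    rw [adj_iff]
    exact Or.inr (Or.inr ⟨e, i, hi, Or.inl ⟨rfl, rfl⟩⟩)
  have mem_Af : ∀ (e : G.edgeSet) (i : Fin (2 * k)), i ∈ Af e ↔ inner e i ∈ T := by
    intro e i; simp [hAfdef]
  have no_consec : ∀ (e : G.edgeSet), ∀ i ∈ Af e, ∀ j ∈ Af e, (i : ℕ) + 1 ≠ (j : ℕ) := by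
    intro e i hi j hj hij
    exact hT _ ((mem_Af e i).1 hi) _ ((mem_Af e j).1 hj) (adj_inner e i j hij)
  -- per edge bound
  have per_edge : ∀ e : G.edgeSet,
      (Af e).card + (if e ∈ B then 1 else 0) ≤ k := by
    intro e
    by_cases he : e ∈ B
    · simp only [he, if_pos]
      have hBe : vmap (ends e).1 ∈ T ∧ vmap (ends e).2 ∈ T := by
        simpa [hBdef] using he
      have h0 : ∀ i ∈ Af e, (i : ℕ) ≠ 0 := by
        intro i hi hi0
        exact hT _ hBe.1 _ ((mem_Af e i).1 hi) (adj_first e i hi0)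
      have h1 : ∀ i ∈ Af e, (i : ℕ) ≠ 2 * k - 1 := by
        intro i hi hi1
        exact hT _ hBe.2 _ ((mem_Af e i).1 hi) (adj_last e i hi1)
      have := no_consec_card_le' k hk (Af e) (no_consec e) h0 h1
      omega
    · simp only [he, if_neg, not_false_iff, add_zero]
      exact no_consec_card_le k (Af e) (no_consec e)
  -- sum bound
  have hm' : m = Fintype.card G.edgeSet := by rw [hm, Nat.card_eq_fintype_card]
  have hsum : B.card + ∑ e : G.edgeSet, (Af e).card ≤ m * k := by
    have h1 : ∑ e : G.edgeSet, ((Af e).card + (if e ∈ B then 1 else 0)) ≤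
        ∑ _e : G.edgeSet, k := Finset.sum_le_sum (fun e _ => per_edge e)
    rw [Finset.sum_add_distrib] at h1
    have h2 : ∑ e : G.edgeSet, (if e ∈ B then 1 else 0) = B.card := by
      rw [Finset.card_eq_sum_ones]
      rw [Finset.sum_ite_mem]
      simp
    have h3 : ∑ _e : G.edgeSet, k = m * k := by
      simp [hm', Finset.sum_const, Finset.card_univ, mul_comm]
    omega
  -- cardinality decomposition of T
  have hTfin : T.toFinset = Sf.image vmap ∪
      Finset.univ.biUnion (fun e : G.edgeSet => (Af e).image (inner e)) := by
    ext w
    simp only [Set.mem_toFinset, Finset.mem_union, Finset.mem_image, Finset.mem_biUnion,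
      Finset.mem_filter, Finset.mem_univ, true_and, hSfdef, hAfdef]
    constructor
    · intro hw
      rcases cover w with ⟨a, rfl⟩ | ⟨e, i, rfl⟩
      · exact Or.inl ⟨a, hw, rfl⟩
      · exact Or.inr ⟨e, i, hw, rfl⟩
    · rintro (⟨a, ha, rfl⟩ | ⟨e, i, hi, rfl⟩) <;> assumption
  have hdisj : Disjoint (Sf.image vmap)
      (Finset.univ.biUnion (fun e : G.edgeSet => (Af e).image (inner e))) := by
    rw [Finset.disjoint_left]
    rintro w hwl hwr
    obtain ⟨a, _, rfl⟩ := Finset.mem_image.1 hwl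
    obtain ⟨e, _, he⟩ := Finset.mem_biUnion.1 hwr
    obtain ⟨i, _, hi⟩ := Finset.mem_image.1 he
    exact vmap_ne_inner a e i hi.symm
  have hinner_e_inj : ∀ e : G.edgeSet, Function.Injective (inner e) := by
    intro e i j hij
    have := inner_inj (a₁ := (e, i)) (a₂ := (e, j)) hij
    exact congrArg Prod.snd this
  have hcardT : T.ncard = Sf.card + ∑ e : G.edgeSet, (Af e).card := by
    rw [Set.ncard_eq_toFinset_card', hTfin, Finset.card_union_of_disjoint hdisj,
      Finset.card_image_of_injective _ vmap_inj, Finset.card_biUnion]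
    · congr 1
      exact Finset.sum_congr rfl (fun e _ => Finset.card_image_of_injective _ (hinner_e_inj e))
    · intro e _ e' _ hee
      rw [Function.onFun, Finset.disjoint_left]
      rintro w hwl hwr
      obtain ⟨i, _, hi⟩ := Finset.mem_image.1 hwl
      obtain ⟨j, _, hj⟩ := Finset.mem_image.1 hwr
      have := inner_inj (a₁ := (e, i)) (a₂ := (e', j)) (hi.trans hj.symm)
      exact hee (congrArg Prod.fst this)
  -- bound Sf.card by α + B.card
  set D : Finset V := B.image (fun e => (ends e).1) with hDdef
  have hindep : ∀ u ∈ ((Sf \ D : Finset V) : Set V), ∀ w ∈ ((Sf \ D : Finset V) : Set V),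
      ¬ G.Adj u w := by
    intro u hu w hw hadj
    have he : s(u, w) ∈ G.edgeSet := hadj
    set e0 : G.edgeSet := ⟨s(u, w), he⟩ with he0
    have heq : s(u, w) = s((ends e0).1, (ends e0).2) := ends_eq e0
    rw [Sym2.eq_iff] at heq
    have hu' := Finset.mem_sdiff.1 (Finset.mem_coe.1 hu)
    have hw' := Finset.mem_sdiff.1 (Finset.mem_coe.1 hw)
    have huT : vmap u ∈ T := (Finset.mem_filter.1 hu'.1).2
    have hwT : vmap w ∈ T := (Finset.mem_filter.1 hw'.1).2
    have he0B : e0 ∈ B := by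
      rw [hBdef, Finset.mem_filter]
      rcases heq with ⟨h1, h2⟩ | ⟨h1, h2⟩
      · exact ⟨Finset.mem_univ _, h1 ▸ huT, h2 ▸ hwT⟩
      · exact ⟨Finset.mem_univ _, h2 ▸ hwT, h1 ▸ huT⟩
    have hfirstD : (ends e0).1 ∈ D := Finset.mem_image_of_mem _ he0B
    rcases heq with ⟨h1, _⟩ | ⟨_, h2⟩
    · exact hu'.2 (h1 ▸ hfirstD)
    · exact hw'.2 (h2 ▸ hfirstD)
  have hSf' : (Sf \ D).card ≤ α :=
    hα.2 ⟨((Sf \ D : Finset V) : Set V), hindep, Set.ncard_coe_finset _⟩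
  have hSfbound : Sf.card ≤ α + B.card := by
    have h1 : Sf.card ≤ (Sf \ D).card + D.card := by
      have := Finset.card_sdiff_add_card Sf D
      have h2 : Sf.card ≤ (Sf ∪ D).card := Finset.card_le_card Finset.subset_union_left
      omega
    have h2 : D.card ≤ B.card := Finset.card_image_le
    omega
  omega

theorem indep_subdivision_le {V W : Type*} [Fintype V] [Fintype W]
    (G : SimpleGraph V) (k : ℕ) (hk : 1 ≤ k) (H : SimpleGraph W)
    (sub : IsSubdivision2k G k H)
    (m : ℕ) (hm : m = Nat.card G.edgeSet)
    (α : ℕ) (hα : IsGreatest {a : ℕ | ∃ S : Set V, IsIndepSet G S ∧ S.ncard = a} α)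
    (T : Set W) (hT : IsIndepSet H T) :
    T.ncard ≤ α + m * k := by
  obtain ⟨vmap, inner, ends, ends_eq, vmap_inj, inner_inj, vmap_ne_inner, cover, adj_iff⟩ := sub
  exact indep_subdivision_le' G k hk H vmap inner ends ends_eq vmap_inj inner_inj
    vmap_ne_inner cover adj_iff m hm α hα T hT
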